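/- arXiv:2601.09122 — 2 statements merged into one kernel-verified Lean document; each statement's English description precedes it below -/
import Mathlib

section
/- Proposition C.4 (fourth-order smoothness implies the higher-order tempered LAN condition, i.e., sufficient conditions for (A2')). Let (α_n) be a positive sequence with α_n → 0 and α_n·n → ∞, and assume (A0). Suppose there is γ > 0 such that, P_n-almost surely: (i) θ ↦ log f_n(X^n|θ) is four times continuously differentiable on the open ball B_{θ*}(γ) := {θ : ‖θ − θ*‖₂ < γ}; (ii) there are measurable M̃_n : Ω_n → [0,∞) with sup_n E_{P_n}[M̃_n/n] < ∞ such that |∂⁴ log f_n(X^n|θ)/∂θ_i ∂θ_j ∂θ_k ∂θ_l| < M̃_n for all indices i,j,k,l and all θ in the closure of B_{θ*}(γ); (iii) P_n( the matrix −(1/n)·∇² log f_n(X^n|θ) is positive definite for all θ ∈ B_{θ*}(γ) ) → 1. Then, with H_n := −(1/n)·∇² log f_n(X^n|θ̂) — which is symmetric and positive definite with P_n-probability tending to one — S_n := (1/n)·∇³ log f_n(X^n|θ̂), and R̃_n(h) := α_n·[log f_n(X^n|θ̂ + h/√(α_n n)) − log f_n(X^n|θ̂)] + (1/2)·hᵀH_n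 h − (1/(6√(α_n n)))·⟨S_n, h⊗h⊗h⟩, for every ε > 0 there is a constant M < ∞ (one may take M = (p²/(12ε))·sup_n E_{P_n}[M̃_n/n] + 1) such that for all n sufficiently large, P_n( sup_{‖h‖₂ ≤ (γ/2)·√(α_n n)} [ R̃_n(h) − (M/(α_n n))·‖h‖₂⁴ ] > 0 ) < ε; that is, the remainder bound in (A2') holds with δ = γ/2 and these H_n and S_n. -/
open MeasureTheory Filter BigOperators

noncomputable section

/-- Multivariate Gaussian density `φ(θ | μ, S)` with mean `μ` and covariance matrix `S`. -/
def gaussDensity (p : ℕ) (μ : EuclideanSpace ℝ (Fin p))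
    (S : Matrix (Fin p) (Fin p) ℝ) (θ : EuclideanSpace ℝ (Fin p)) : ℝ :=
  (2 * Real.pi) ^ (-(p : ℝ) / 2) * S.det ^ (-(1 : ℝ) / 2) *
    Real.exp (-(1 / 2) * ∑ i, ∑ j, (θ i - μ i) * S⁻¹ i j * (θ j - μ j))

/-- The tempered (`α`-)posterior density. -/
def post {p : ℕ} {Ω : Type} (L : Ω → EuclideanSpace ℝ (Fin p) → ℝ)
    (prior : EuclideanSpace ℝ (Fin p) → ℝ) (α : ℝ) (ω : Ω)
    (θ : EuclideanSpace ℝ (Fin p)) : ℝ :=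
  L ω θ ^ α * prior θ / ∫ θ', L ω θ' ^ α * prior θ'

/-- Convergence in `P n`-probability of a sequence of random vectors to a constant. -/
def TendstoInProb {Ω : ℕ → Type} [∀ n, MeasurableSpace (Ω n)]
    (P : ∀ n, Measure (Ω n)) {E : Type*} [NormedAddCommGroup E]
    (Y : ∀ n, Ω n → E) (y : E) : Prop :=
  ∀ ε : ℝ, 0 < ε →
    Tendsto (fun n => P n {ω | ε < ‖Y n ω - y‖}) atTop (nhds 0)

/-- Assumption (A0): consistency and asymptotic normality of the MLE. -/
def A0 {p : ℕ} {Ω : ℕ → Type} [∀ n, MeasurableSpace (Ω n)] (P : ∀ n, Measure (Ω n))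
    (θhat : ∀ n, Ω n → EuclideanSpace ℝ (Fin p)) (θstar : EuclideanSpace ℝ (Fin p)) : Prop :=
  TendstoInProb P θhat θstar ∧
  ∃ S : Matrix (Fin p) (Fin p) ℝ, S.IsSymm ∧ S.PosDef ∧
    ∀ f : EuclideanSpace ℝ (Fin p) → ℝ, Continuous f → (∃ C, ∀ x, |f x| ≤ C) →
      Tendsto (fun n => ∫ ω, f ((Real.sqrt n) • (θhat n ω - θstar)) ∂ P n) atTop
        (nhds (∫ x, f x * gaussDensity p 0 S x))

/-- Assumption (A1): the prior is continuous and positive near `θstar`. -/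
def A1 {p : ℕ} (prior : EuclideanSpace ℝ (Fin p) → ℝ)
    (θstar : EuclideanSpace ℝ (Fin p)) : Prop :=
  ∃ δ : ℝ, 0 < δ ∧ ContinuousOn prior (Metric.ball θstar δ) ∧
    ∀ θ ∈ Metric.ball θstar δ, 0 < prior θ

/-- Assumption (A2): tempered local asymptotic normality with matrix `V`. -/
def A2 {p : ℕ} {Ω : ℕ → Type} [∀ n, MeasurableSpace (Ω n)] (P : ∀ n, Measure (Ω n))
    (L : ∀ n, Ω n → EuclideanSpace ℝ (Fin p) → ℝ)
    (θhat : ∀ n, Ω n → EuclideanSpace ℝ (Fin p)) (θstar : EuclideanSpace ℝ (Fin p))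
    (α : ℕ → ℝ) (V : Matrix (Fin p) (Fin p) ℝ) : Prop :=
  V.IsSymm ∧ V.PosDef ∧
  ∀ r : ℝ, 0 < r → ∀ ε : ℝ, 0 < ε →
    Tendsto (fun n => P n {ω | ∃ h : EuclideanSpace ℝ (Fin p), ‖h‖ ≤ r ∧
      ε < |α n * (Real.log (L n ω (θstar + (Real.sqrt (α n * (n : ℝ)))⁻¹ • h)) -
              Real.log (L n ω θstar))
            - Real.sqrt (α n) *
                ∑ i, ∑ j, h i * V i j * (Real.sqrt n * (θhat n ω j - θstar j))
            + (1 / 2) * ∑ i, ∑ j, h i * V i j * h j|}) atTop (nhds 0)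

/-- Assumption (A3): all rescaled posterior moments are bounded in probability. -/
def A3 {p : ℕ} {Ω : ℕ → Type} [∀ n, MeasurableSpace (Ω n)] (P : ∀ n, Measure (Ω n))
    (L : ∀ n, Ω n → EuclideanSpace ℝ (Fin p) → ℝ)
    (prior : EuclideanSpace ℝ (Fin p) → ℝ) (θstar : EuclideanSpace ℝ (Fin p))
    (α : ℕ → ℝ) : Prop :=
  ∀ ε : ℝ, 0 < ε → ∀ k₀ : ℝ, 0 ≤ k₀ → ∃ M : ℝ, ∃ N : ℕ, ∀ n : ℕ,
    (N : ℝ) ≤ α n * n →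
    P n {ω | M < ∫ θ, ‖Real.sqrt (α n * (n : ℝ)) • (θ - θstar)‖ ^ k₀ *
        post (L n) prior (α n) ω θ} < ENNReal.ofReal ε

/-- Conditions 1 and 2 (with a common radius `r`): salience of the pseudo-true parameter
and local quadratic behavior of the log-likelihood near the MLE. -/
def Conds12 {p : ℕ} {Ω : ℕ → Type} [∀ n, MeasurableSpace (Ω n)] (P : ∀ n, Measure (Ω n))
    (L : ∀ n, Ω n → EuclideanSpace ℝ (Fin p) → ℝ)
    (θhat : ∀ n, Ω n → EuclideanSpace ℝ (Fin p))
    (θstar : EuclideanSpace ℝ (Fin p)) : Prop :=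
  ∃ Lc c₀ c₁ c₂ r : ℝ, ∃ γfun : ℝ → ℝ,
    0 < Lc ∧ 0 < c₀ ∧ 0 < c₁ ∧ 0 ≤ c₂ ∧ Real.exp (c₂ / c₀) / c₁ < r ∧
    (∀ v : ℝ, 0 ≤ v → 0 ≤ γfun v) ∧
    (∀ v : ℝ, r ≤ v → c₀ * Real.log (1 + c₁ * v) - c₂ ≤ γfun v) ∧
    Tendsto (fun n => P n {ω | ∀ θ, r ≤ ‖θ - θstar‖ →
        Real.log (L n ω θ) - Real.log (L n ω θstar) ≤
          -(Lc * (n : ℝ) * γfun ‖θ - θstar‖)}) atTop (nhds 1) ∧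
    ∃ c₃ c₄ : ℝ, 0 < c₃ ∧ 0 < c₄ ∧
      Tendsto (fun n => P n {ω | ∀ θ, ‖θ - θhat n ω‖ < 2 * r →
          -((n : ℝ) * c₃ * ‖θ - θhat n ω‖ ^ 2) ≤
              Real.log (L n ω θ) - Real.log (L n ω (θhat n ω)) ∧
            Real.log (L n ω θ) - Real.log (L n ω (θhat n ω)) ≤
              -((n : ℝ) * c₄ * ‖θ - θhat n ω‖ ^ 2)}) atTop (nhds 1)


/-- Assumption (A1'): the prior is positive and C² near `θstar`, with finite mean. -/
def A1' {p : ℕ} (prior : EuclideanSpace ℝ (Fin p) → ℝ)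
    (θstar : EuclideanSpace ℝ (Fin p)) : Prop :=
  (∃ δ : ℝ, 0 < δ ∧ (∀ θ ∈ Metric.ball θstar δ, 0 < prior θ) ∧
    ContDiffOn ℝ 2 prior (Metric.ball θstar δ)) ∧
  Integrable (fun θ : EuclideanSpace ℝ (Fin p) => ‖θ‖ * prior θ)

/-- Assumption (A2'): higher-order tempered LAN centered at the MLE, with data `H` and `S`. -/
def A2' {p : ℕ} {Ω : ℕ → Type} [∀ n, MeasurableSpace (Ω n)] (P : ∀ n, Measure (Ω n))
    (L : ∀ n, Ω n → EuclideanSpace ℝ (Fin p) → ℝ)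
    (θhat : ∀ n, Ω n → EuclideanSpace ℝ (Fin p)) (α : ℕ → ℝ)
    (H : ∀ n, Ω n → Matrix (Fin p) (Fin p) ℝ)
    (S : ∀ n, Ω n → Fin p → Fin p → Fin p → ℝ) : Prop :=
  Tendsto (fun n => P n {ω | (H n ω).IsSymm ∧ (H n ω).PosDef}) atTop (nhds 1) ∧
  ∃ M : ℝ, ∃ δ : ℝ, 0 < δ ∧ ∀ ε : ℝ, 0 < ε → ∃ N : ℕ, ∀ n ≥ N,
    P n {ω | ∃ h : EuclideanSpace ℝ (Fin p), ‖h‖ ≤ δ * Real.sqrt (α n * (n : ℝ)) ∧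
      (M / (α n * (n : ℝ))) * ‖h‖ ^ 4 <
        α n * (Real.log (L n ω (θhat n ω + (Real.sqrt (α n * (n : ℝ)))⁻¹ • h)) -
            Real.log (L n ω (θhat n ω)))
          + (1 / 2) * ∑ i, ∑ j, h i * H n ω i j * h j
          - (6 * Real.sqrt (α n * (n : ℝ)))⁻¹ *
              ∑ i, ∑ j, ∑ k, S n ω i j k * h i * h j * h k} < ENNReal.ofReal ε

/-- Assumption (A3'): salience of the MLE. -/
def A3' {p : ℕ} {Ω : ℕ → Type} [∀ n, MeasurableSpace (Ω n)] (P : ∀ n, Measure (Ω n))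
    (L : ∀ n, Ω n → EuclideanSpace ℝ (Fin p) → ℝ)
    (θhat : ∀ n, Ω n → EuclideanSpace ℝ (Fin p)) : Prop :=
  ∀ ε : ℝ, 0 < ε → ∀ δ' : ℝ, 0 < δ' → ∃ c : ℝ, 0 < c ∧ ∃ N : ℕ, ∀ n ≥ N,
    P n {ω | ∃ θ, δ' ≤ ‖θ - θhat n ω‖ ∧
      -c < (n : ℝ)⁻¹ * (Real.log (L n ω θ) - Real.log (L n ω (θhat n ω)))}
      < ENNReal.ofReal ε

/-- Condition (ALap) for the function `b` in the Laplace approximation. -/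
def ALap {p : ℕ} {Ω : ℕ → Type} [∀ n, MeasurableSpace (Ω n)] (P : ∀ n, Measure (Ω n))
    (θhat : ∀ n, Ω n → EuclideanSpace ℝ (Fin p)) (θstar : EuclideanSpace ℝ (Fin p))
    (α : ℕ → ℝ) (b : EuclideanSpace ℝ (Fin p) → ℝ) : Prop :=
  Integrable b ∧
  (∃ δ : ℝ, 0 < δ ∧ ∃ C : ℝ, ∀ θ ∈ Metric.ball θstar δ, |b θ| ≤ C) ∧
  ∃ v : ∀ n, Ω n → EuclideanSpace ℝ (Fin p), ∃ M : ℝ, ∃ δ : ℝ, 0 < δ ∧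
    ∀ ε : ℝ, 0 < ε → ∃ N : ℕ, ∀ n ≥ N,
      P n {ω | ∃ h : EuclideanSpace ℝ (Fin p), ‖h‖ ≤ δ * Real.sqrt (α n * (n : ℝ)) ∧
        (∑ i, v n ω i * h i) / Real.sqrt (α n * (n : ℝ)) + (M / (α n * (n : ℝ))) * ‖h‖ ^ 2 <
          b (θhat n ω + (Real.sqrt (α n * (n : ℝ)))⁻¹ • h) - b (θhat n ω)}
        < ENNReal.ofReal ε

/-- The posterior mean as a vector in Euclidean space. -/
def postMean {p : ℕ} {Ω : Type} (L : Ω → EuclideanSpace ℝ (Fin p) → ℝ)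
    (prior : EuclideanSpace ℝ (Fin p) → ℝ) (α : ℝ) (ω : Ω) :
    EuclideanSpace ℝ (Fin p) :=
  (WithLp.equiv 2 (Fin p → ℝ)).symm (fun j => ∫ θ, θ j * post L prior α ω θ)

/-- A coupling of two measures. -/
def IsCoupling {X : Type} [MeasurableSpace X] (μ ν : Measure X)
    (γ : Measure (X × X)) : Prop :=
  IsProbabilityMeasure γ ∧ γ.map Prod.fst = μ ∧ γ.map Prod.snd = ν

/-- The `s`-Wasserstein distance. -/
def wassersteinDist {X : Type} [MeasurableSpace X] [PseudoMetricSpace X]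
    (s : ℝ) (μ ν : Measure X) : ℝ :=
  sInf {c : ℝ | ∃ γ : Measure (X × X), IsCoupling μ ν γ ∧
    c = (∫ x : X × X, dist x.1 x.2 ^ s ∂γ) ^ (1 / s)}

/-- The total variation distance between two measures. -/
def tvDist {X : Type} [MeasurableSpace X] (μ ν : Measure X) : ℝ :=
  sSup {x : ℝ | ∃ A : Set X, MeasurableSet A ∧ x = |(μ A).toReal - (ν A).toReal|}

/-- Standard basis vector of Euclidean space. -/
def basisE (p : ℕ) (i : Fin p) : EuclideanSpace ℝ (Fin p) :=
  EuclideanSpace.single i (1 : ℝ)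

/-- First directional partial derivative. -/
def d1 {p : ℕ} (g : EuclideanSpace ℝ (Fin p) → ℝ) (θ : EuclideanSpace ℝ (Fin p))
    (i : Fin p) : ℝ :=
  fderiv ℝ g θ (basisE p i)

/-- Second-order partial derivative. -/
def d2 {p : ℕ} (g : EuclideanSpace ℝ (Fin p) → ℝ) (θ : EuclideanSpace ℝ (Fin p))
    (i j : Fin p) : ℝ :=
  fderiv ℝ (fun θ' => d1 g θ' j) θ (basisE p i)

/-- Third-order partial derivative. -/
def d3 {p : ℕ} (g : EuclideanSpace ℝ (Fin p) → ℝ) (θ : EuclideanSpace ℝ (Fin p))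
    (i j k : Fin p) : ℝ :=
  fderiv ℝ (fun θ' => d2 g θ' j k) θ (basisE p i)

/-- Fourth-order partial derivative. -/
def d4 {p : ℕ} (g : EuclideanSpace ℝ (Fin p) → ℝ) (θ : EuclideanSpace ℝ (Fin p))
    (i j k l : Fin p) : ℝ :=
  fderiv ℝ (fun θ' => d3 g θ' j k l) θ (basisE p i)


lemma basis_sum {p : ℕ} (u : EuclideanSpace ℝ (Fin p)) :
    ∑ i, u i • basisE p i = u := by
  ext j
  have : (∑ i, u i • basisE p i) j = ∑ i, (u i • basisE p i) j := by
    change (WithLp.ofLp (∑ i, u i • basisE p i)) j = _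
    rw [WithLp.ofLp_sum, Finset.sum_apply]
  rw [this]
  simp [basisE, EuclideanSpace.single_apply]

lemma dir_hasDerivAt {p : ℕ} (F : EuclideanSpace ℝ (Fin p) → ℝ)
    (x u : EuclideanSpace ℝ (Fin p)) (t : ℝ)
    (hF : DifferentiableAt ℝ F (x + t • u)) :
    HasDerivAt (fun s => F (x + s • u))
      (∑ j, u j * fderiv ℝ F (x + t • u) (basisE p j)) t := by
  have hline : HasDerivAt (fun s : ℝ => x + s • u) u t := by
    simpa using ((hasDerivAt_id t).smul_const u).const_add x
  have h2 := hF.hasFDerivAt.comp_hasDerivAt t hline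
  have h3 : (fderiv ℝ F (x + t • u)) u = ∑ j, u j * fderiv ℝ F (x + t • u) (basisE p j) := by
    set D := fderiv ℝ F (x + t • u) with hD
    conv_lhs => rw [← basis_sum u]
    rw [map_sum]
    simp [smul_eq_mul]
  rw [h3] at h2
  exact h2

lemma mono_aux (f f' : ℝ → ℝ) (hd : ∀ t ∈ Set.Icc (0:ℝ) 1, HasDerivAt f (f' t) t)
    (hle : ∀ t ∈ Set.Icc (0:ℝ) 1, f' t ≤ 0) : ∀ t ∈ Set.Icc (0:ℝ) 1, f t ≤ f 0 := by
  intro t ht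
  have hA : AntitoneOn f (Set.Icc 0 1) := by
    apply antitoneOn_of_deriv_nonpos (convex_Icc 0 1)
    · exact fun s hs => (hd s hs).continuousAt.continuousWithinAt
    · intro s hs
      rw [interior_Icc] at hs
      exact (hd s (Set.Ioo_subset_Icc_self hs)).differentiableAt.differentiableWithinAt
    · intro s hs
      rw [interior_Icc] at hs
      rw [(hd s (Set.Ioo_subset_Icc_self hs)).deriv]
      exact hle s (Set.Ioo_subset_Icc_self hs)
  exact hA (Set.left_mem_Icc.2 zero_le_one) ht ht.1

lemma taylor4_upper (ψ0 ψ1 ψ2 ψ3 ψ4 : ℝ → ℝ) (B : ℝ)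
    (h0 : ∀ t ∈ Set.Icc (0:ℝ) 1, HasDerivAt ψ0 (ψ1 t) t)
    (h1 : ∀ t ∈ Set.Icc (0:ℝ) 1, HasDerivAt ψ1 (ψ2 t) t)
    (h2 : ∀ t ∈ Set.Icc (0:ℝ) 1, HasDerivAt ψ2 (ψ3 t) t)
    (h3 : ∀ t ∈ Set.Icc (0:ℝ) 1, HasDerivAt ψ3 (ψ4 t) t)
    (hB : ∀ t ∈ Set.Icc (0:ℝ) 1, ψ4 t ≤ B) :
    ψ0 1 ≤ ψ0 0 + ψ1 0 + ψ2 0 / 2 + ψ3 0 / 6 + B / 24 := by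
  have step3 : ∀ t ∈ Set.Icc (0:ℝ) 1, ψ3 t ≤ ψ3 0 + B * t := by
    have := mono_aux (fun t => ψ3 t - ψ3 0 - B * t) (fun t => ψ4 t - B)
      (fun t ht => by
        have h := (h3 t ht).sub (((hasDerivAt_id t).const_mul B).const_add (ψ3 0))
        convert h using 1
        · rfl
        · rfl
        · funext s; (try simp only [id_eq, pow_one, Pi.sub_apply]); ring
        · (try simp only [id_eq, pow_one]); ring)
      (fun t ht => by
        show ψ4 t - B ≤ 0
        linarith [hB t ht])
    intro t ht
    have h := this t ht
    try simp only [id_eq] at h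
    linarith
  have step2 : ∀ t ∈ Set.Icc (0:ℝ) 1, ψ2 t ≤ ψ2 0 + ψ3 0 * t + B * t ^ 2 / 2 := by
    have := mono_aux (fun t => ψ2 t - ψ2 0 - ψ3 0 * t - B * t ^ 2 / 2)
      (fun t => ψ3 t - ψ3 0 - B * t)
      (fun t ht => by
        have hpow : HasDerivAt (fun t : ℝ => B * t ^ 2 / 2) (B * t) t := by
          have h := (hasDerivAt_pow 2 t).const_mul (B / 2)
          convert h using 1
          · rfl
          · rfl
          · funext s; (try simp only [id_eq, pow_one]); ring
          · (try simp only [id_eq, pow_one]); ring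
        have h := ((h2 t ht).sub
          (((hasDerivAt_id t).const_mul (ψ3 0)).const_add (ψ2 0))).sub hpow
        convert h using 1
        · rfl
        · rfl
        · funext s; (try simp only [id_eq, pow_one, Pi.sub_apply]); ring
        · (try simp only [id_eq, pow_one]); ring)
      (fun t ht => by
        show ψ3 t - ψ3 0 - B * t ≤ 0
        linarith [step3 t ht])
    intro t ht
    have h := this t ht
    try simp only [id_eq] at h
    have h0' : (0:ℝ) ^ 2 = 0 := by norm_num
    nlinarith [h]
  have step1 : ∀ t ∈ Set.Icc (0:ℝ) 1,
      ψ1 t ≤ ψ1 0 + ψ2 0 * t + ψ3 0 * t ^ 2 / 2 + B * t ^ 3 / 6 := by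
    have := mono_aux
      (fun t => ψ1 t - ψ1 0 - ψ2 0 * t - ψ3 0 * t ^ 2 / 2 - B * t ^ 3 / 6)
      (fun t => ψ2 t - ψ2 0 - ψ3 0 * t - B * t ^ 2 / 2)
      (fun t ht => by
        have hp2 : HasDerivAt (fun t : ℝ => ψ3 0 * t ^ 2 / 2) (ψ3 0 * t) t := by
          have h := (hasDerivAt_pow 2 t).const_mul (ψ3 0 / 2)
          convert h using 1
          · rfl
          · rfl
          · funext s; (try simp only [id_eq, pow_one]); ring
          · (try simp only [id_eq, pow_one]); ring
        have hp3 : HasDerivAt (fun t : ℝ => B * t ^ 3 / 6) (B * t ^ 2 / 2) t := by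
          have h := (hasDerivAt_pow 3 t).const_mul (B / 6)
          convert h using 1
          · rfl
          · rfl
          · funext s; (try simp only [id_eq, pow_one]); ring
          · ring
        have h := (((h1 t ht).sub
          (((hasDerivAt_id t).const_mul (ψ2 0)).const_add (ψ1 0))).sub hp2).sub hp3
        convert h using 1
        · rfl
        · rfl
        · funext s; (try simp only [id_eq, pow_one, Pi.sub_apply]); ring
        · (try simp only [id_eq, pow_one]); ring)
      (fun t ht => by
        show ψ2 t - ψ2 0 - ψ3 0 * t - B * t ^ 2 / 2 ≤ 0
        linarith [step2 t ht])
    intro t ht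
    have h := this t ht
    try simp only [id_eq] at h
    nlinarith [h]
  have step0 := mono_aux
    (fun t => ψ0 t - ψ0 0 - ψ1 0 * t - ψ2 0 * t ^ 2 / 2 - ψ3 0 * t ^ 3 / 6 - B * t ^ 4 / 24)
    (fun t => ψ1 t - ψ1 0 - ψ2 0 * t - ψ3 0 * t ^ 2 / 2 - B * t ^ 3 / 6)
    (fun t ht => by
      have hp2 : HasDerivAt (fun t : ℝ => ψ2 0 * t ^ 2 / 2) (ψ2 0 * t) t := by
        have h := (hasDerivAt_pow 2 t).const_mul (ψ2 0 / 2)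
        convert h using 1
        · rfl
        · rfl
        · funext s; (try simp only [id_eq, pow_one]); ring
        · (try simp only [id_eq, pow_one]); ring
      have hp3 : HasDerivAt (fun t : ℝ => ψ3 0 * t ^ 3 / 6) (ψ3 0 * t ^ 2 / 2) t := by
        have h := (hasDerivAt_pow 3 t).const_mul (ψ3 0 / 6)
        convert h using 1
        · rfl
        · rfl
        · funext s; (try simp only [id_eq, pow_one]); ring
        · ring
      have hp4 : HasDerivAt (fun t : ℝ => B * t ^ 4 / 24) (B * t ^ 3 / 6) t := by
        have h := (hasDerivAt_pow 4 t).const_mul (B / 24)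
        convert h using 1
        · rfl
        · rfl
        · funext s; (try simp only [id_eq, pow_one]); ring
        · ring
      have h := ((((h0 t ht).sub
        (((hasDerivAt_id t).const_mul (ψ1 0)).const_add (ψ0 0))).sub hp2).sub hp3).sub hp4
      convert h using 1
      · rfl
      · rfl
      · funext s; (try simp only [id_eq, pow_one, Pi.sub_apply]); ring
      · (try simp only [id_eq, pow_one]); ring)
    (fun t ht => by
      show ψ1 t - ψ1 0 - ψ2 0 * t - ψ3 0 * t ^ 2 / 2 - B * t ^ 3 / 6 ≤ 0
      linarith [step1 t ht])
  have h := step0 1 (Set.right_mem_Icc.2 zero_le_one)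
  try simp only [id_eq] at h
  nlinarith [h]

-- regularity of partials
lemma contDiffOn_d1 {p : ℕ} {g : EuclideanSpace ℝ (Fin p) → ℝ} {s : Set (EuclideanSpace ℝ (Fin p))}
    (hs : IsOpen s) (hg : ContDiffOn ℝ 4 g s) (j : Fin p) :
    ContDiffOn ℝ 3 (fun θ => d1 g θ j) s :=
  (hg.fderiv_of_isOpen hs (by norm_num)).clm_apply contDiffOn_const

lemma contDiffOn_d2 {p : ℕ} {g : EuclideanSpace ℝ (Fin p) → ℝ} {s : Set (EuclideanSpace ℝ (Fin p))}
    (hs : IsOpen s) (hg : ContDiffOn ℝ 4 g s) (j k : Fin p) :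
    ContDiffOn ℝ 2 (fun θ => d2 g θ j k) s :=
  (((contDiffOn_d1 hs hg k).fderiv_of_isOpen hs (by norm_num)).clm_apply contDiffOn_const)

lemma contDiffOn_d3 {p : ℕ} {g : EuclideanSpace ℝ (Fin p) → ℝ} {s : Set (EuclideanSpace ℝ (Fin p))}
    (hs : IsOpen s) (hg : ContDiffOn ℝ 4 g s) (j k l : Fin p) :
    ContDiffOn ℝ 1 (fun θ => d3 g θ j k l) s :=
  (((contDiffOn_d2 hs hg k l).fderiv_of_isOpen hs (by norm_num)).clm_apply contDiffOn_const)

lemma abs_sum_mul_le {p : ℕ} (u : EuclideanSpace ℝ (Fin p)) (f : Fin p → ℝ) (C : ℝ)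
    (h : ∀ x, |f x| ≤ C) :
    |∑ x, u x * f x| ≤ (∑ x, |u x|) * C := by
  calc |∑ x, u x * f x| ≤ ∑ x, |u x * f x| := Finset.abs_sum_le_sum_abs _ _
  _ ≤ ∑ x, |u x| * C := Finset.sum_le_sum fun x _ => by
      rw [abs_mul]; exact mul_le_mul_of_nonneg_left (h x) (abs_nonneg _)
  _ = _ := by rw [Finset.sum_mul]

lemma tri_sum {p : ℕ} (G : Fin p → Fin p → Fin p → ℝ) :
    ∑ i, ∑ j, ∑ k, G i j k = ∑ i, ∑ j, ∑ k, G k j i := by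
  calc ∑ i, ∑ j, ∑ k, G i j k
      = ∑ i, ∑ k, ∑ j, G i j k := Finset.sum_congr rfl fun _ _ => Finset.sum_comm
    _ = ∑ k, ∑ i, ∑ j, G i j k := Finset.sum_comm
    _ = ∑ k, ∑ j, ∑ i, G i j k := Finset.sum_congr rfl fun _ _ => Finset.sum_comm

lemma key_taylor {p : ℕ} {γ : ℝ} (hγ : 0 < γ) (θstar x u : EuclideanSpace ℝ (Fin p))
    (g : EuclideanSpace ℝ (Fin p) → ℝ)
    (hg : ContDiffOn ℝ 4 g (Metric.ball θstar γ))
    (hx : ‖x - θstar‖ ≤ γ / 4) (hu : ‖u‖ ≤ γ / 2)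
    (hd1 : fderiv ℝ g x = 0)
    (B : ℝ) (hB : ∀ θ ∈ Metric.ball θstar γ, ∀ i j k l, |d4 g θ i j k l| ≤ B) :
    g (x + u) ≤ g x + (1/2) * ∑ i, ∑ j, u i * u j * d2 g x i j
      + (1/6) * ∑ i, ∑ j, ∑ k, u i * u j * u k * d3 g x i j k
      + B * (p:ℝ)^2 * ‖u‖^4 / 24 := by
  have hs : IsOpen (Metric.ball θstar γ) := Metric.isOpen_ball
  have hmem : ∀ t ∈ Set.Icc (0:ℝ) 1, x + t • u ∈ Metric.ball θstar γ := by
    intro t ht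
    have : ‖x + t • u - θstar‖ ≤ ‖x - θstar‖ + |t| * ‖u‖ := by
      calc ‖x + t • u - θstar‖ = ‖(x - θstar) + t • u‖ := by rw [show x + t • u - θstar = (x - θstar) + t • u from by abel]
      _ ≤ ‖x - θstar‖ + ‖t • u‖ := norm_add_le _ _
      _ = ‖x - θstar‖ + |t| * ‖u‖ := by rw [norm_smul, Real.norm_eq_abs]
    have habs : |t| ≤ 1 := abs_le.2 ⟨by linarith [ht.1], ht.2⟩
    have : ‖x + t • u - θstar‖ ≤ γ / 4 + γ / 2 := by
      have h2 : |t| * ‖u‖ ≤ 1 * (γ / 2) :=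
        mul_le_mul habs hu (norm_nonneg _) zero_le_one
      linarith
    rw [Metric.mem_ball, dist_eq_norm]
    linarith
  -- differentiability facts
  have hgd : ∀ t ∈ Set.Icc (0:ℝ) 1, DifferentiableAt ℝ g (x + t • u) := fun t ht =>
    (hg.differentiableOn (by norm_num)).differentiableAt (hs.mem_nhds (hmem t ht))
  have hd1d : ∀ (i : Fin p), ∀ t ∈ Set.Icc (0:ℝ) 1,
      DifferentiableAt ℝ (fun θ => d1 g θ i) (x + t • u) := fun i t ht =>
    ((contDiffOn_d1 hs hg i).differentiableOn (by norm_num)).differentiableAt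
      (hs.mem_nhds (hmem t ht))
  have hd2d : ∀ (i j : Fin p), ∀ t ∈ Set.Icc (0:ℝ) 1,
      DifferentiableAt ℝ (fun θ => d2 g θ i j) (x + t • u) := fun i j t ht =>
    ((contDiffOn_d2 hs hg i j).differentiableOn (by norm_num)).differentiableAt
      (hs.mem_nhds (hmem t ht))
  have hd3d : ∀ (i j k : Fin p), ∀ t ∈ Set.Icc (0:ℝ) 1,
      DifferentiableAt ℝ (fun θ => d3 g θ i j k) (x + t • u) := fun i j k t ht =>
    ((contDiffOn_d3 hs hg i j k).differentiableOn (by norm_num)).differentiableAt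
      (hs.mem_nhds (hmem t ht))
  -- the chain of derivatives along the segment
  set ψ0 : ℝ → ℝ := fun t => g (x + t • u) with hψ0
  set ψ1 : ℝ → ℝ := fun t => ∑ i, u i * d1 g (x + t • u) i with hψ1
  set ψ2 : ℝ → ℝ := fun t => ∑ i, u i * ∑ j, u j * d2 g (x + t • u) j i with hψ2
  set ψ3 : ℝ → ℝ := fun t => ∑ i, u i * ∑ j, u j * ∑ k, u k * d3 g (x + t • u) k j i with hψ3
  set ψ4 : ℝ → ℝ :=
    fun t => ∑ i, u i * ∑ j, u j * ∑ k, u k * ∑ l, u l * d4 g (x + t • u) l k j i with hψ4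
  have h0 : ∀ t ∈ Set.Icc (0:ℝ) 1, HasDerivAt ψ0 (ψ1 t) t := by
    intro t ht
    exact dir_hasDerivAt g x u t (hgd t ht)
  have h1 : ∀ t ∈ Set.Icc (0:ℝ) 1, HasDerivAt ψ1 (ψ2 t) t := by
    intro t ht
    apply HasDerivAt.fun_sum
    intro i _
    exact (dir_hasDerivAt (fun θ => d1 g θ i) x u t (hd1d i t ht)).const_mul (u i)
  have h2 : ∀ t ∈ Set.Icc (0:ℝ) 1, HasDerivAt ψ2 (ψ3 t) t := by
    intro t ht
    apply HasDerivAt.fun_sum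
    intro i _
    apply HasDerivAt.const_mul
    apply HasDerivAt.fun_sum
    intro j _
    exact (dir_hasDerivAt (fun θ => d2 g θ j i) x u t (hd2d j i t ht)).const_mul (u j)
  have h3 : ∀ t ∈ Set.Icc (0:ℝ) 1, HasDerivAt ψ3 (ψ4 t) t := by
    intro t ht
    apply HasDerivAt.fun_sum
    intro i _
    apply HasDerivAt.const_mul
    apply HasDerivAt.fun_sum
    intro j _
    apply HasDerivAt.const_mul
    apply HasDerivAt.fun_sum
    intro k _
    exact (dir_hasDerivAt (fun θ => d3 g θ k j i) x u t (hd3d k j i t ht)).const_mul (u k)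
  -- bound on the fourth derivative along the segment
  have hBn : ∀ t ∈ Set.Icc (0:ℝ) 1, ψ4 t ≤ B * (p:ℝ)^2 * ‖u‖^4 := by
    intro t ht
    have hmemt := hmem t ht
    rcases Nat.eq_zero_or_pos p with hp | hp
    · subst hp
      simp [hψ4]
    · have i0 : Fin p := ⟨0, hp⟩
      have hB0 : 0 ≤ B := (abs_nonneg _).trans (hB _ hmemt i0 i0 i0 i0)
      set S : ℝ := ∑ i, |u i| with hS
      have hS0 : 0 ≤ S := Finset.sum_nonneg fun _ _ => abs_nonneg _
      have l4 : ∀ k j i : Fin p, |∑ l, u l * d4 g (x + t • u) l k j i| ≤ S * B :=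
        fun k j i => abs_sum_mul_le u _ B (fun l => hB _ hmemt l k j i)
      have l3 : ∀ j i : Fin p,
          |∑ k, u k * ∑ l, u l * d4 g (x + t • u) l k j i| ≤ S * (S * B) :=
        fun j i => abs_sum_mul_le u _ (S * B) (fun k => l4 k j i)
      have l2 : ∀ i : Fin p,
          |∑ j, u j * ∑ k, u k * ∑ l, u l * d4 g (x + t • u) l k j i| ≤ S * (S * (S * B)) :=
        fun i => abs_sum_mul_le u _ (S * (S * B)) (fun j => l3 j i)
      have l1 : |ψ4 t| ≤ S * (S * (S * (S * B))) := by
        rw [hψ4]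
        exact abs_sum_mul_le u _ (S * (S * (S * B))) (fun i => l2 i)
      have hnorm : ‖u‖ ^ 2 = ∑ i, |u i| ^ 2 := by
        rw [EuclideanSpace.norm_eq]
        rw [Real.sq_sqrt (Finset.sum_nonneg fun _ _ => sq_nonneg _)]
        simp [Real.norm_eq_abs]
      have hsq : S ^ 2 ≤ (p : ℝ) * ‖u‖ ^ 2 := by
        rw [hnorm]
        have := sq_sum_le_card_mul_sum_sq (s := (Finset.univ : Finset (Fin p)))
          (f := fun i => |u i|)
        simpa using this
      have hS4 : S * (S * (S * (S * B))) ≤ (p:ℝ)^2 * ‖u‖^4 * B := by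
        have h1 : S ^ 2 * S ^ 2 ≤ ((p:ℝ) * ‖u‖ ^ 2) * ((p:ℝ) * ‖u‖ ^ 2) := by
          have hp2 : (0:ℝ) ≤ (p:ℝ) * ‖u‖ ^ 2 := by positivity
          exact mul_le_mul hsq hsq (sq_nonneg S) hp2
        nlinarith [h1, hS0, hB0]
      calc ψ4 t ≤ |ψ4 t| := le_abs_self _
      _ ≤ S * (S * (S * (S * B))) := l1
      _ ≤ (p:ℝ)^2 * ‖u‖^4 * B := hS4
      _ = B * (p:ℝ)^2 * ‖u‖^4 := by ring
  have final := taylor4_upper ψ0 ψ1 ψ2 ψ3 ψ4 (B * (p:ℝ)^2 * ‖u‖^4) h0 h1 h2 h3 hBn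
  have hx0 : x + (0:ℝ) • u = x := by simp
  have e00 : ψ0 1 = g (x + u) := by rw [hψ0]; simp
  have e01 : ψ0 0 = g x := by rw [hψ0]; simp
  have e1 : ψ1 0 = 0 := by
    rw [hψ1]
    simp only [hx0, d1, hd1]
    simp
  have e2 : ψ2 0 = ∑ i, ∑ j, u i * u j * d2 g x i j := by
    rw [hψ2]
    simp only [hx0]
    simp_rw [Finset.mul_sum]
    rw [Finset.sum_comm]
    exact Finset.sum_congr rfl fun a _ => Finset.sum_congr rfl fun b _ => by ring
  have e3 : ψ3 0 = ∑ i, ∑ j, ∑ k, u i * u j * u k * d3 g x i j k := by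
    rw [hψ3]
    simp only [hx0]
    simp_rw [Finset.mul_sum]
    rw [tri_sum (fun i j k => u i * (u j * (u k * d3 g x k j i)))]
    exact Finset.sum_congr rfl fun a _ => Finset.sum_congr rfl fun b _ =>
      Finset.sum_congr rfl fun c _ => by ring
  rw [e00, e01, e1, e2, e3] at final
  linarith

lemma combine_ineq {A G T2 T3 R Q S M4 : ℝ} (hA : 0 ≤ A) (hkey : G ≤ T2 + T3 + R)
    (e2 : A * T2 + Q = 0) (e3 : A * T3 - S = 0) (hR : A * R ≤ M4) :
    A * G + Q - S ≤ M4 := by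
  nlinarith [mul_le_mul_of_nonneg_left hkey hA]

set_option maxHeartbeats 1000000 in
/-- **Proposition C.4** (fourth-order smoothness implies the higher-order tempered LAN
condition, i.e., sufficient conditions for (A2')). -/
theorem sufficient_conditions_for_A2'
    {p : ℕ} {Ω : ℕ → Type} [∀ n, MeasurableSpace (Ω n)]
    (P : ∀ n, Measure (Ω n)) [∀ n, IsProbabilityMeasure (P n)]
    (L : ∀ n, Ω n → EuclideanSpace ℝ (Fin p) → ℝ)
    (θhat : ∀ n, Ω n → EuclideanSpace ℝ (Fin p))
    (θstar : EuclideanSpace ℝ (Fin p))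
    (α : ℕ → ℝ) (γ : ℝ)
    (hLmeas : ∀ n, Measurable (Function.uncurry (L n)))
    (hLpos : ∀ n ω θ, 0 < L n ω θ)
    (hθmeas : ∀ n, Measurable (θhat n))
    (hMLE : ∀ n ω θ, θ ≠ θhat n ω → L n ω θ < L n ω (θhat n ω))
    -- tempering sequence: `α n → 0` and `α n * n → ∞`
    (hαpos : ∀ n, 0 < α n)
    (hα0 : Tendsto α atTop (nhds 0))
    (hαn : Tendsto (fun n => α n * (n : ℝ)) atTop atTop)
    -- assumption (A0)
    (hA0 : A0 P θhat θstar)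
    (hγ : 0 < γ)
    -- (i) the log-likelihood is a.s. four times continuously differentiable near `θstar`
    (hsmooth : ∀ n, ∀ᵐ ω ∂ P n,
      ContDiffOn ℝ 4 (fun θ => Real.log (L n ω θ)) (Metric.ball θstar γ))
    -- (ii) fourth derivatives are dominated by `M̃ n` with `sup_n E[M̃ n / n] < ∞`
    (Mt : ∀ n, Ω n → ℝ)
    (hMtmeas : ∀ n, Measurable (Mt n))
    (hMtnn : ∀ n ω, 0 ≤ Mt n ω)
    (hMtint : ∀ n, Integrable (fun ω => Mt n ω / (n : ℝ)) (P n))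
    (hMtE : ∃ C : ℝ, ∀ n, (∫ ω, Mt n ω / (n : ℝ) ∂ P n) ≤ C)
    (hbound : ∀ n, ∀ᵐ ω ∂ P n, ∀ θ ∈ closure (Metric.ball θstar γ), ∀ i j k l : Fin p,
      |d4 (fun θ' => Real.log (L n ω θ')) θ i j k l| < Mt n ω)
    -- (iii) the negative rescaled Hessian is positive definite on the ball w.h.p.
    (hposdef : Tendsto (fun n => P n {ω | ∀ θ ∈ Metric.ball θstar γ,
        (Matrix.of fun i j : Fin p =>
          -((n : ℝ)⁻¹ * d2 (fun θ' => Real.log (L n ω θ')) θ i j)).PosDef})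
      atTop (nhds 1)) :
    -- `H n := -(1/n)·∇² log f_n(·|θ̂)` is symmetric and positive definite w.h.p. ...
    (Tendsto (fun n => P n {ω |
        (Matrix.of fun i j : Fin p =>
          -((n : ℝ)⁻¹ * d2 (fun θ' => Real.log (L n ω θ')) (θhat n ω) i j)).IsSymm ∧
        (Matrix.of fun i j : Fin p =>
          -((n : ℝ)⁻¹ * d2 (fun θ' => Real.log (L n ω θ')) (θhat n ω) i j)).PosDef})
      atTop (nhds 1)) ∧
    -- ... and the remainder bound of (A2') holds with `δ = γ/2`, these `H n` and
    -- `S n := (1/n)·∇³ log f_n(·|θ̂)`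
    (∀ ε : ℝ, 0 < ε → ∃ M : ℝ, ∃ N : ℕ, ∀ n ≥ N,
      P n {ω | ∃ h : EuclideanSpace ℝ (Fin p),
        ‖h‖ ≤ (γ / 2) * Real.sqrt (α n * (n : ℝ)) ∧
        (M / (α n * (n : ℝ))) * ‖h‖ ^ 4 <
          α n * (Real.log (L n ω (θhat n ω + (Real.sqrt (α n * (n : ℝ)))⁻¹ • h)) -
              Real.log (L n ω (θhat n ω)))
            + (1 / 2) * ∑ i, ∑ j, h i *
                (-((n : ℝ)⁻¹ * d2 (fun θ' => Real.log (L n ω θ')) (θhat n ω) i j)) * h j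
            - (6 * Real.sqrt (α n * (n : ℝ)))⁻¹ *
                ∑ i, ∑ j, ∑ k,
                  ((n : ℝ)⁻¹ * d3 (fun θ' => Real.log (L n ω θ')) (θhat n ω) i j k) *
                    h i * h j * h k} < ENNReal.ofReal ε) := by
  have hs : IsOpen (Metric.ball θstar γ) := Metric.isOpen_ball
  have hfar0 := hA0.1 (γ / 4) (by linarith)
  constructor
  · -- Part 1: symmetry and positive definiteness with probability tending to one
    have hincl : ∀ n : ℕ,
        {ω | ∀ θ ∈ Metric.ball θstar γ,
          (Matrix.of fun i j : Fin p =>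
            -((n : ℝ)⁻¹ * d2 (fun θ' => Real.log (L n ω θ')) θ i j)).PosDef}
        ⊆ {ω | (Matrix.of fun i j : Fin p =>
              -((n : ℝ)⁻¹ * d2 (fun θ' => Real.log (L n ω θ')) (θhat n ω) i j)).IsSymm ∧
            (Matrix.of fun i j : Fin p =>
              -((n : ℝ)⁻¹ * d2 (fun θ' => Real.log (L n ω θ')) (θhat n ω) i j)).PosDef}
          ∪ ({ω | γ / 4 < ‖θhat n ω - θstar‖}
            ∪ {ω | ¬ ContDiffOn ℝ 4 (fun θ => Real.log (L n ω θ)) (Metric.ball θstar γ)}) := by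
      intro n ω hω
      by_cases hcl : γ / 4 < ‖θhat n ω - θstar‖
      · exact Or.inr (Or.inl hcl)
      by_cases hsm : ContDiffOn ℝ 4 (fun θ => Real.log (L n ω θ)) (Metric.ball θstar γ)
      swap
      · exact Or.inr (Or.inr hsm)
      left
      push_neg at hcl
      have hball : θhat n ω ∈ Metric.ball θstar γ := by
        rw [Metric.mem_ball, dist_eq_norm]
        linarith
      refine ⟨?_, hω _ hball⟩
      have hd2sym : ∀ i j : Fin p,
          d2 (fun θ => Real.log (L n ω θ)) (θhat n ω) i j
            = d2 (fun θ => Real.log (L n ω θ)) (θhat n ω) j i := by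
        intro i j
        have hev : ∀ᶠ y in nhds (θhat n ω),
            HasFDerivAt (fun θ => Real.log (L n ω θ))
              (fderiv ℝ (fun θ => Real.log (L n ω θ)) y) y := by
          filter_upwards [hs.eventually_mem hball] with y hy
          exact ((hsm.differentiableOn (by norm_num)).differentiableAt
            (hs.mem_nhds hy)).hasFDerivAt
        have hf'd : DifferentiableAt ℝ
            (fun y => fderiv ℝ (fun θ => Real.log (L n ω θ)) y) (θhat n ω) :=
          ((hsm.fderiv_of_isOpen (m := 3) hs (by norm_num)).differentiableOn
            (by norm_num)).differentiableAt (hs.mem_nhds hball)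
        have hsec := second_derivative_symmetric_of_eventually_of_real hev
          hf'd.hasFDerivAt (basisE p i) (basisE p j)
        have hrw : ∀ a b : Fin p, d2 (fun θ => Real.log (L n ω θ)) (θhat n ω) a b
            = fderiv ℝ (fun y => fderiv ℝ (fun θ => Real.log (L n ω θ)) y) (θhat n ω)
                (basisE p a) (basisE p b) := by
          intro a b
          have hder := (hf'd.hasFDerivAt.clm_apply
            (hasFDerivAt_const (basisE p b) (θhat n ω))).fderiv
          calc d2 (fun θ => Real.log (L n ω θ)) (θhat n ω) a b
              = fderiv ℝ (fun y => fderiv ℝ (fun θ => Real.log (L n ω θ)) y (basisE p b))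
                  (θhat n ω) (basisE p a) := rfl
            _ = fderiv ℝ (fun y => fderiv ℝ (fun θ => Real.log (L n ω θ)) y) (θhat n ω)
                  (basisE p a) (basisE p b) := by rw [hder]; simp
        rw [hrw i j, hrw j i]
        exact hsec
      show Matrix.IsSymm _
      apply Matrix.ext
      intro i j
      rw [Matrix.transpose_apply]
      simp only [Matrix.of_apply]
      rw [hd2sym j i]
    have hle1 : ∀ n : ℕ,
        P n {ω | ∀ θ ∈ Metric.ball θstar γ,
            (Matrix.of fun i j : Fin p =>
              -((n : ℝ)⁻¹ * d2 (fun θ' => Real.log (L n ω θ')) θ i j)).PosDef}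
          - P n {ω | γ / 4 < ‖θhat n ω - θstar‖}
        ≤ P n {ω | (Matrix.of fun i j : Fin p =>
              -((n : ℝ)⁻¹ * d2 (fun θ' => Real.log (L n ω θ')) (θhat n ω) i j)).IsSymm ∧
            (Matrix.of fun i j : Fin p =>
              -((n : ℝ)⁻¹ * d2 (fun θ' => Real.log (L n ω θ')) (θhat n ω) i j)).PosDef} := by
      intro n
      have h1 := measure_mono (μ := P n) (hincl n)
      have h2 := measure_union_le (μ := P n)
        {ω | (Matrix.of fun i j : Fin p =>
              -((n : ℝ)⁻¹ * d2 (fun θ' => Real.log (L n ω θ')) (θhat n ω) i j)).IsSymm ∧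
            (Matrix.of fun i j : Fin p =>
              -((n : ℝ)⁻¹ * d2 (fun θ' => Real.log (L n ω θ')) (θhat n ω) i j)).PosDef}
        ({ω | γ / 4 < ‖θhat n ω - θstar‖}
          ∪ {ω | ¬ ContDiffOn ℝ 4 (fun θ => Real.log (L n ω θ)) (Metric.ball θstar γ)})
      have h3 := measure_union_le (μ := P n) {ω | γ / 4 < ‖θhat n ω - θstar‖}
        {ω | ¬ ContDiffOn ℝ 4 (fun θ => Real.log (L n ω θ)) (Metric.ball θstar γ)}
      have h4 : P n {ω | ¬ ContDiffOn ℝ 4 (fun θ => Real.log (L n ω θ))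
          (Metric.ball θstar γ)} = 0 := ae_iff.1 (hsmooth n)
      rw [h4, add_zero] at h3
      refine tsub_le_iff_right.2 ?_
      exact le_trans h1 (le_trans h2 (add_le_add_right h3 _))
    have hlow : Tendsto (fun n =>
        P n {ω | ∀ θ ∈ Metric.ball θstar γ,
            (Matrix.of fun i j : Fin p =>
              -((n : ℝ)⁻¹ * d2 (fun θ' => Real.log (L n ω θ')) θ i j)).PosDef}
          - P n {ω | γ / 4 < ‖θhat n ω - θstar‖}) atTop (nhds 1) := by
      have := ENNReal.Tendsto.sub hposdef hfar0 (Or.inl (by norm_num))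
      simpa using this
    exact tendsto_of_tendsto_of_tendsto_of_le_of_le hlow tendsto_const_nhds hle1
      (fun n => prob_le_one)
  · -- Part 2: the remainder bound
    intro ε hε
    obtain ⟨C, hC⟩ := hMtE
    have hC0 : 0 ≤ C :=
      le_trans (integral_nonneg fun ω => div_nonneg (hMtnn 0 ω) (Nat.cast_nonneg 0)) (hC 0)
    set K : ℝ := 3 * C / ε + 1 with hK
    have hK0 : 0 < K := by positivity
    set M : ℝ := (p : ℝ) ^ 2 * K / 24 + 1 with hM
    refine ⟨M, ?_⟩
    have hofr : (0:ENNReal) < ENNReal.ofReal (ε / 3) := ENNReal.ofReal_pos.2 (by positivity)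
    obtain ⟨N1, hN1⟩ := eventually_atTop.1 (hfar0.eventually_lt_const hofr)
    refine ⟨max N1 1, fun n hn => ?_⟩
    have hn1 : 1 ≤ n := le_trans (le_max_right _ _) hn
    have hnpos : (0:ℝ) < (n:ℝ) := by exact_mod_cast hn1
    refine lt_of_le_of_lt (measure_mono (?_ :
        _ ⊆ ({ω | ¬ ContDiffOn ℝ 4 (fun θ => Real.log (L n ω θ)) (Metric.ball θstar γ)}
          ∪ ({ω | ¬ ∀ θ ∈ closure (Metric.ball θstar γ), ∀ i j k l : Fin p,
                |d4 (fun θ' => Real.log (L n ω θ')) θ i j k l| < Mt n ω}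
            ∪ ({ω | γ / 4 < ‖θhat n ω - θstar‖}
              ∪ {ω | K ≤ Mt n ω / (n:ℝ)}))))) ?_
    · -- the deterministic inclusion
      intro ω hω
      by_cases hsm : ContDiffOn ℝ 4 (fun θ => Real.log (L n ω θ)) (Metric.ball θstar γ)
      swap
      · exact Or.inl hsm
      by_cases hbd : ∀ θ ∈ closure (Metric.ball θstar γ), ∀ i j k l : Fin p,
          |d4 (fun θ' => Real.log (L n ω θ')) θ i j k l| < Mt n ω
      swap
      · exact Or.inr (Or.inl hbd)
      by_cases hcl : γ / 4 < ‖θhat n ω - θstar‖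
      · exact Or.inr (Or.inr (Or.inl hcl))
      by_cases hmt : K ≤ Mt n ω / (n:ℝ)
      · exact Or.inr (Or.inr (Or.inr hmt))
      exfalso
      push_neg at hcl hmt
      obtain ⟨h, hh, hlt⟩ := hω
      set c : ℝ := Real.sqrt (α n * (n:ℝ)) with hcdef
      have hA : 0 < α n := hαpos n
      have hAn : 0 < α n * (n:ℝ) := mul_pos hA hnpos
      have hc : 0 < c := Real.sqrt_pos.2 hAn
      have hcc2 : c * c = α n * (n:ℝ) := Real.mul_self_sqrt hAn.le
      set u : EuclideanSpace ℝ (Fin p) := c⁻¹ • h with hudef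
      have hui : ∀ i, u i = c⁻¹ * h i := fun i => rfl
      have hun : ‖u‖ = c⁻¹ * ‖h‖ := by
        rw [hudef, norm_smul, Real.norm_eq_abs, abs_of_pos (inv_pos.2 hc)]
      have hu2 : ‖u‖ ≤ γ / 2 := by
        have h1 := mul_le_mul_of_nonneg_left hh (inv_nonneg.2 hc.le)
        have h2 : c⁻¹ * (γ / 2 * c) = γ / 2 := by field_simp
        rw [hun]; linarith
      have hx4 : ‖θhat n ω - θstar‖ ≤ γ / 4 := hcl
      have hmax : IsLocalMax (fun θ => Real.log (L n ω θ)) (θhat n ω) := by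
        apply Filter.Eventually.of_forall
        intro y
        show Real.log (L n ω y) ≤ Real.log (L n ω (θhat n ω))
        by_cases hy : y = θhat n ω
        · rw [hy]
        · exact (Real.log_le_log_iff (hLpos n ω y) (hLpos n ω _)).2 (hMLE n ω y hy).le
      have hd1z : fderiv ℝ (fun θ => Real.log (L n ω θ)) (θhat n ω) = 0 :=
        hmax.fderiv_eq_zero
      have hBle : ∀ θ ∈ Metric.ball θstar γ, ∀ i j k l : Fin p,
          |d4 (fun θ' => Real.log (L n ω θ')) θ i j k l| ≤ Mt n ω :=
        fun θ hθ i j k l => (hbd θ (subset_closure hθ) i j k l).le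
      have key := key_taylor hγ θstar (θhat n ω) u (fun θ => Real.log (L n ω θ))
        hsm hx4 hu2 hd1z (Mt n ω) hBle
      beta_reduce at key
      have hcc : α n * (c⁻¹ * c⁻¹) = (n:ℝ)⁻¹ := by
        rw [← mul_inv, hcc2]
        field_simp
      have hc3 : α n * (c⁻¹ * c⁻¹ * c⁻¹) = (n:ℝ)⁻¹ * c⁻¹ := by
        calc α n * (c⁻¹ * c⁻¹ * c⁻¹) = α n * (c⁻¹ * c⁻¹) * c⁻¹ := by ring
        _ = (n:ℝ)⁻¹ * c⁻¹ := by rw [hcc]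
      have eq2 : α n * (1 / 2 * ∑ i, ∑ j, u i * u j *
            d2 (fun θ' => Real.log (L n ω θ')) (θhat n ω) i j)
          + 1 / 2 * ∑ i, ∑ j, h i *
              (-((n:ℝ)⁻¹ * d2 (fun θ' => Real.log (L n ω θ')) (θhat n ω) i j)) * h j = 0 := by
        simp_rw [Finset.mul_sum, ← Finset.sum_add_distrib]
        refine Finset.sum_eq_zero fun i _ => Finset.sum_eq_zero fun j _ => ?_
        rw [hui i, hui j]
        linear_combination (1/2 * h i * h j *
          d2 (fun θ' => Real.log (L n ω θ')) (θhat n ω) i j) * hcc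
      have eq3 : α n * (1 / 6 * ∑ i, ∑ j, ∑ k, u i * u j * u k *
            d3 (fun θ' => Real.log (L n ω θ')) (θhat n ω) i j k)
          - (6 * c)⁻¹ * ∑ i, ∑ j, ∑ k,
              ((n:ℝ)⁻¹ * d3 (fun θ' => Real.log (L n ω θ')) (θhat n ω) i j k)
                * h i * h j * h k = 0 := by
        simp_rw [Finset.mul_sum, ← Finset.sum_sub_distrib]
        refine Finset.sum_eq_zero fun i _ => Finset.sum_eq_zero fun j _ =>
          Finset.sum_eq_zero fun k _ => ?_
        rw [hui i, hui j, hui k]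
        linear_combination (1/6 * h i * h j * h k *
          d3 (fun θ' => Real.log (L n ω θ')) (θhat n ω) i j k) * hc3
      have hc4 : c ^ 4 = (α n * (n:ℝ)) ^ 2 := by
        calc c ^ 4 = (c * c) ^ 2 := by ring
        _ = (α n * (n:ℝ)) ^ 2 := by rw [hcc2]
      have hReq : α n * (Mt n ω * (p:ℝ) ^ 2 * ‖u‖ ^ 4 / 24)
          = (Mt n ω / (n:ℝ)) * ((p:ℝ) ^ 2 / 24) * ((α n * (n:ℝ))⁻¹ * ‖h‖ ^ 4) := by
        rw [hun, mul_pow, inv_pow, hc4]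
        field_simp
      have hcoef : Mt n ω / (n:ℝ) * ((p:ℝ) ^ 2 / 24) ≤ M := by
        have hp24 : (0:ℝ) ≤ (p:ℝ) ^ 2 / 24 := by positivity
        have h2 := mul_le_mul_of_nonneg_right hmt.le hp24
        have h3 : K * ((p:ℝ) ^ 2 / 24) ≤ M := by
          rw [hM, show K * ((p:ℝ) ^ 2 / 24) = (p:ℝ) ^ 2 * K / 24 from by ring]
          exact le_add_of_nonneg_right zero_le_one
        linarith only [h2, h3]
      have hR : α n * (Mt n ω * (p:ℝ) ^ 2 * ‖u‖ ^ 4 / 24)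
          ≤ M / (α n * (n:ℝ)) * ‖h‖ ^ 4 := by
        rw [hReq, div_eq_mul_inv]
        have hfac : (0:ℝ) ≤ (α n * (n:ℝ))⁻¹ * ‖h‖ ^ 4 := by positivity
        calc Mt n ω / (n:ℝ) * ((p:ℝ) ^ 2 / 24) * ((α n * (n:ℝ))⁻¹ * ‖h‖ ^ 4)
            ≤ M * ((α n * (n:ℝ))⁻¹ * ‖h‖ ^ 4) := mul_le_mul_of_nonneg_right hcoef hfac
          _ = M * (α n * (n:ℝ))⁻¹ * ‖h‖ ^ 4 := by ring
      have hkey : Real.log (L n ω (θhat n ω + u)) - Real.log (L n ω (θhat n ω))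
          ≤ 1 / 2 * ∑ i, ∑ j, u i * u j *
              d2 (fun θ' => Real.log (L n ω θ')) (θhat n ω) i j
            + 1 / 6 * ∑ i, ∑ j, ∑ k, u i * u j * u k *
              d3 (fun θ' => Real.log (L n ω θ')) (θhat n ω) i j k
            + Mt n ω * (p:ℝ) ^ 2 * ‖u‖ ^ 4 / 24 := by linarith only [key]
      have hfinal := combine_ineq hA.le hkey eq2 eq3 hR
      exact absurd hlt (not_lt.2 hfinal)
    · -- the probability bound
      have hS1 : P n {ω | ¬ ContDiffOn ℝ 4 (fun θ => Real.log (L n ω θ))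
          (Metric.ball θstar γ)} = 0 := ae_iff.1 (hsmooth n)
      have hS2 : P n {ω | ¬ ∀ θ ∈ closure (Metric.ball θstar γ), ∀ i j k l : Fin p,
          |d4 (fun θ' => Real.log (L n ω θ')) θ i j k l| < Mt n ω} = 0 :=
        ae_iff.1 (hbound n)
      have hS3 : P n {ω | γ / 4 < ‖θhat n ω - θstar‖} < ENNReal.ofReal (ε / 3) :=
        hN1 n (le_trans (le_max_left _ _) hn)
      have hS4 : P n {ω | K ≤ Mt n ω / (n:ℝ)} < ENNReal.ofReal (ε / 3) := by
        have hmark := mul_meas_ge_le_integral_of_nonneg (μ := P n)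
          (f := fun ω => Mt n ω / (n:ℝ))
          (Filter.Eventually.of_forall fun ω => div_nonneg (hMtnn n ω) (Nat.cast_nonneg n))
          (hMtint n) K
        have hfin : P n {ω | K ≤ Mt n ω / (n:ℝ)} ≠ ⊤ := measure_ne_top _ _
        have htR : (P n {ω | K ≤ Mt n ω / (n:ℝ)}).toReal < ε / 3 := by
          have h2 : K * (P n {ω | K ≤ Mt n ω / (n:ℝ)}).toReal ≤ C :=
            le_trans hmark (hC n)
          have h3 : C < K * (ε / 3) := by
            have he : ε / 3 * K = C + ε / 3 := by
              rw [hK]; field_simp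
            nlinarith
          nlinarith [ENNReal.toReal_nonneg (a := P n {ω | K ≤ Mt n ω / (n:ℝ)}), hK0]
        calc P n {ω | K ≤ Mt n ω / (n:ℝ)}
            = ENNReal.ofReal ((P n {ω | K ≤ Mt n ω / (n:ℝ)}).toReal) :=
              (ENNReal.ofReal_toReal hfin).symm
          _ < ENNReal.ofReal (ε / 3) :=
              (ENNReal.ofReal_lt_ofReal_iff (by positivity)).2 htR
      calc P n ({ω | ¬ ContDiffOn ℝ 4 (fun θ => Real.log (L n ω θ)) (Metric.ball θstar γ)}
          ∪ ({ω | ¬ ∀ θ ∈ closure (Metric.ball θstar γ), ∀ i j k l : Fin p,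
                |d4 (fun θ' => Real.log (L n ω θ')) θ i j k l| < Mt n ω}
            ∪ ({ω | γ / 4 < ‖θhat n ω - θstar‖} ∪ {ω | K ≤ Mt n ω / (n:ℝ)})))
          ≤ P n {ω | ¬ ContDiffOn ℝ 4 (fun θ => Real.log (L n ω θ)) (Metric.ball θstar γ)}
            + (P n {ω | ¬ ∀ θ ∈ closure (Metric.ball θstar γ), ∀ i j k l : Fin p,
                  |d4 (fun θ' => Real.log (L n ω θ')) θ i j k l| < Mt n ω}
              + (P n {ω | γ / 4 < ‖θhat n ω - θstar‖} + P n {ω | K ≤ Mt n ω / (n:ℝ)})) :=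
            le_trans (measure_union_le _ _) (add_le_add_right
              (le_trans (measure_union_le _ _)
                (add_le_add_right (measure_union_le _ _) _)) _)
        _ = P n {ω | γ / 4 < ‖θhat n ω - θstar‖} + P n {ω | K ≤ Mt n ω / (n:ℝ)} := by
            rw [hS1, hS2, zero_add, zero_add]
        _ < ENNReal.ofReal (ε / 3) + ENNReal.ofReal (ε / 3) := ENNReal.add_lt_add hS3 hS4
        _ = ENNReal.ofReal (ε / 3 + ε / 3) :=
            (ENNReal.ofReal_add (by positivity) (by positivity)).symm
        _ < ENNReal.ofReal ε := (ENNReal.ofReal_lt_ofReal_iff hε).2 (by linarith)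
end
end

section
/- Proposition C.5 (the tilted likelihood preserves the MLE and the tempered LAN condition). Let (α_n) be a positive sequence with α_n → 0 and α_n·n → ∞, and let (α̂_n) be positive random variables with α̂_n/α_n → 1 in P_n-probability. Define the tilted likelihood f̃_n(X^n|θ) := f_n(X^n|θ)^{α̂_n/α_n}. Assume f_n satisfies (A0) and (A2), with matrix V and Δ_n := √n(θ̂ − θ*). Then: (i) θ̂ is also the unique maximizer of θ ↦ f̃_n(X^n|θ), so f̃_n satisfies (A0) with the same θ̂ and θ*; and (ii) f̃_n satisfies (A2) with the same V and Δ_n, i.e., setting R̃_n(h) := α_n·[log f̃_n(X^n|θ* + h/√(α_n n)) − log f̃_n(X^n|θ*)] − √α_n·hᵀVΔ_n + (1/2)·hᵀVh, one has sup_{‖h‖₂ ≤ r} |R̃_n(h)| → 0 in P_n-probability for every r > 0. -/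
open MeasureTheory Filter BigOperators

noncomputable section

lemma euclid_coord_le {p : ℕ} (x : EuclideanSpace ℝ (Fin p)) (i : Fin p) : |x i| ≤ ‖x‖ := by
  rw [EuclideanSpace.norm_eq]
  have h1 : |x i| = Real.sqrt (|x i| ^ 2) := by rw [Real.sqrt_sq_eq_abs]; simp
  rw [h1]
  apply Real.sqrt_le_sqrt
  have : ‖x i‖ ^ 2 ≤ ∑ j, ‖x j‖ ^ 2 :=
    Finset.single_le_sum (f := fun j => ‖x j‖ ^ 2) (fun j _ => by positivity) (Finset.mem_univ i)
  simpa using this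

lemma tight_of_A0 {p : ℕ} {Ω : ℕ → Type} [∀ n, MeasurableSpace (Ω n)]
    (P : ∀ n, Measure (Ω n)) [∀ n, IsProbabilityMeasure (P n)]
    (θhat : ∀ n, Ω n → EuclideanSpace ℝ (Fin p)) (θstar : EuclideanSpace ℝ (Fin p))
    (hθmeas : ∀ n, Measurable (θhat n)) (hA0 : A0 P θhat θstar) (η : ℝ) (hη : 0 < η) :
    ∃ M : ℝ, 0 < M ∧ ∀ᶠ n in atTop,
      P n {ω | M < ‖(Real.sqrt n) • (θhat n ω - θstar)‖} ≤ ENNReal.ofReal η := by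
  obtain ⟨-, S, -, hSpd, hconv⟩ := hA0
  set g := gaussDensity p 0 S with hgdef
  have hgpos : ∀ x, 0 < g x := by
    intro x
    have hdet : 0 < S.det := hSpd.det_pos
    rw [hgdef]; unfold gaussDensity
    have h2pi : (0:ℝ) < 2 * Real.pi := by positivity
    positivity
  have hgcont : Continuous g := by
    rw [hgdef]; unfold gaussDensity
    apply Continuous.mul continuous_const
    apply Real.continuous_exp.comp
    apply Continuous.mul continuous_const
    apply continuous_finset_sum; intro i _
    apply continuous_finset_sum; intro j _
    exact (((EuclideanSpace.proj i).continuous.sub continuous_const).mul continuous_const).mul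
      ((EuclideanSpace.proj j).continuous.sub continuous_const)
  -- total mass of g is 1
  have h1 := hconv (fun _ => 1) continuous_const ⟨1, fun x => by norm_num⟩
  have h1' : Tendsto (fun _ : ℕ => (1:ℝ)) atTop (nhds (∫ x, g x)) := by
    have heq : (fun n : ℕ => ∫ ω, (fun _ : EuclideanSpace ℝ (Fin p) => (1:ℝ))
        ((Real.sqrt n) • (θhat n ω - θstar)) ∂ P n) = fun _ => (1:ℝ) := by
      funext n; simp
    have heq2 : (∫ x, (fun _ : EuclideanSpace ℝ (Fin p) => (1:ℝ)) x * g x) = ∫ x, g x := by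
      simp
    rw [heq, heq2] at h1; exact h1
  have hg1 : (∫ x, g x) = 1 := tendsto_nhds_unique h1' tendsto_const_nhds
  have hgint : Integrable g := by
    by_contra hni
    rw [integral_undef hni] at hg1
    norm_num at hg1
  -- truncation functions
  set F : ℕ → EuclideanSpace ℝ (Fin p) → ℝ :=
    fun k x => max 0 (min 1 (2 - ‖x‖ / (k + 1))) with hFdef
  have hFeq : ∀ (k : ℕ) (x : EuclideanSpace ℝ (Fin p)),
      F k x = max 0 (min 1 (2 - ‖x‖ / ((k:ℝ) + 1))) := fun k x => rfl
  have hFcont : ∀ k, Continuous (F k) := fun k =>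
    continuous_const.max (continuous_const.min
      (continuous_const.sub (continuous_norm.div_const _)))
  have hF0 : ∀ k x, 0 ≤ F k x := fun k x => le_max_left _ _
  have hF1 : ∀ k x, F k x ≤ 1 := fun k x => max_le zero_le_one (min_le_left _ _)
  have hFone : ∀ (k : ℕ) (x : EuclideanSpace ℝ (Fin p)), ‖x‖ ≤ (k:ℝ) + 1 → F k x = 1 := by
    intro k x hx
    have hk1 : (0:ℝ) < (k:ℝ) + 1 := by positivity
    have hd : ‖x‖ / ((k:ℝ) + 1) ≤ 1 := by rw [div_le_one hk1]; exact hx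
    have hmin : min 1 (2 - ‖x‖ / ((k:ℝ) + 1)) = 1 := min_eq_left (by linarith)
    rw [hFeq, hmin]; exact max_eq_right zero_le_one
  have hFzero : ∀ (k : ℕ) (x : EuclideanSpace ℝ (Fin p)), 2 * ((k:ℝ) + 1) ≤ ‖x‖ →
      F k x = 0 := by
    intro k x hx
    have hk1 : (0:ℝ) < (k:ℝ) + 1 := by positivity
    have h2 : (2:ℝ) ≤ ‖x‖ / ((k:ℝ) + 1) := by rw [le_div_iff₀ hk1]; linarith
    have hmin : min 1 (2 - ‖x‖ / ((k:ℝ) + 1)) ≤ 0 := le_trans (min_le_right _ _) (by linarith)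
    rw [hFeq]; exact max_eq_left hmin
  -- dominated convergence
  have hDCT : Tendsto (fun k => ∫ x, F k x * g x) atTop (nhds (∫ x, g x)) := by
    apply tendsto_integral_of_dominated_convergence g
      (fun k => ((hFcont k).mul hgcont).aestronglyMeasurable) hgint
    · intro k
      filter_upwards with x
      rw [Real.norm_eq_abs, Pi.mul_apply, abs_mul, abs_of_nonneg (hF0 k x), abs_of_nonneg (hgpos x).le]
      nlinarith [hgpos x, hF1 k x, hF0 k x]
    · filter_upwards with x
      have hev : ∀ᶠ k : ℕ in atTop, F k x * g x = g x := by
        filter_upwards [eventually_ge_atTop ⌈‖x‖⌉₊] with k hk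
        rw [hFone k x (by
          have h2 : ‖x‖ ≤ (k:ℝ) := le_trans (Nat.le_ceil ‖x‖) (by exact_mod_cast hk)
          linarith), one_mul]
      exact Tendsto.congr' (hev.mono fun k hk => hk.symm) tendsto_const_nhds
  rw [hg1] at hDCT
  obtain ⟨k, hk⟩ := (hDCT.eventually (eventually_gt_nhds (show 1 - η/2 < 1 by linarith))).exists
  refine ⟨2 * ((k:ℝ) + 1), by positivity, ?_⟩
  have happly := hconv (F k) (hFcont k) ⟨1, fun x => by
    rw [abs_of_nonneg (hF0 k x)]; exact hF1 k x⟩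
  have hev : ∀ᶠ n in atTop,
      1 - η < ∫ ω, F k ((Real.sqrt n) • (θhat n ω - θstar)) ∂ P n :=
    happly.eventually (eventually_gt_nhds (by linarith))
  filter_upwards [hev] with n hn
  set Dv : Ω n → EuclideanSpace ℝ (Fin p) := fun ω => (Real.sqrt n) • (θhat n ω - θstar)
    with hDvdef
  set Sset : Set (Ω n) := {ω | 2 * ((k:ℝ) + 1) < ‖Dv ω‖} with hSsetdef
  have hDvmeas : Measurable Dv := by have hm := hθmeas n; rw [hDvdef]; fun_prop
  have hSmeas : MeasurableSet Sset := by
    have : Sset = (fun ω => ‖Dv ω‖) ⁻¹' Set.Ioi (2 * ((k:ℝ) + 1)) := rfl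
    rw [this]
    exact (hDvmeas.norm) measurableSet_Ioi
  have hFint : Integrable (fun ω => F k (Dv ω)) (P n) := by
    apply Integrable.mono' (integrable_const (1:ℝ))
      (((hFcont k).measurable.comp hDvmeas).aestronglyMeasurable)
    filter_upwards with ω
    simp only [Function.comp_apply]
    rw [Real.norm_eq_abs, abs_of_nonneg (hF0 k _)]
    exact hF1 k _
  have hind : ∀ ω, Sset.indicator (fun _ => (1:ℝ)) ω ≤ 1 - F k (Dv ω) := by
    intro ω
    by_cases hω : ω ∈ Sset
    · rw [Set.indicator_of_mem hω]
      have : F k (Dv ω) = 0 := hFzero k (Dv ω) (le_of_lt hω)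
      linarith
    · rw [Set.indicator_of_notMem hω]
      have := hF1 k (Dv ω); have := hF0 k (Dv ω); linarith
  have hgint' : Integrable (fun ω => 1 - F k (Dv ω)) (P n) := by
    exact (integrable_const 1).sub hFint
  have hmono := integral_mono (μ := P n) (f := Sset.indicator fun _ => (1:ℝ))
    (g := fun ω => 1 - F k (Dv ω)) ((integrable_const (1:ℝ)).indicator hSmeas) hgint' hind
  rw [integral_indicator_const (1:ℝ) hSmeas] at hmono
  have hRHS : (∫ ω, (1 - F k (Dv ω)) ∂ P n) = 1 - ∫ ω, F k (Dv ω) ∂ P n := by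
    rw [integral_sub (integrable_const 1) hFint, integral_const]
    simp [measure_univ]
  rw [hRHS] at hmono
  simp only [smul_eq_mul, mul_one] at hmono
  have hto : (P n Sset).toReal ≤ η := by rw [measureReal_def] at hmono; linarith
  calc P n Sset = ENNReal.ofReal ((P n Sset).toReal) :=
        (ENNReal.ofReal_toReal (measure_ne_top (P n) Sset)).symm
    _ ≤ ENNReal.ofReal η := ENNReal.ofReal_le_ofReal hto

set_option maxHeartbeats 1000000 in
/-- **Proposition C.5** (the tilted likelihood `f̃ = f^{α̂/α}` preserves the MLE and the
tempered LAN condition). -/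
theorem tilted_likelihood_preserves_MLE_and_LAN
    {p : ℕ} {Ω : ℕ → Type} [∀ n, MeasurableSpace (Ω n)]
    (P : ∀ n, Measure (Ω n)) [∀ n, IsProbabilityMeasure (P n)]
    (L : ∀ n, Ω n → EuclideanSpace ℝ (Fin p) → ℝ)
    (θhat : ∀ n, Ω n → EuclideanSpace ℝ (Fin p))
    (θstar : EuclideanSpace ℝ (Fin p))
    (V : Matrix (Fin p) (Fin p) ℝ)
    (α : ℕ → ℝ) (αhat : ∀ n, Ω n → ℝ)
    (hLmeas : ∀ n, Measurable (Function.uncurry (L n)))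
    (hLpos : ∀ n ω θ, 0 < L n ω θ)
    (hθmeas : ∀ n, Measurable (θhat n))
    (hMLE : ∀ n ω θ, θ ≠ θhat n ω → L n ω θ < L n ω (θhat n ω))
    -- tempering sequence: `α n → 0` and `α n * n → ∞`
    (hαpos : ∀ n, 0 < α n)
    (hα0 : Tendsto α atTop (nhds 0))
    (hαn : Tendsto (fun n => α n * (n : ℝ)) atTop atTop)
    -- data-dependent tempering with `αhat / α → 1` in probability
    (hαhatmeas : ∀ n, Measurable (αhat n))
    (hαhatpos : ∀ n ω, 0 < αhat n ω)
    (hratio : TendstoInProb P (fun n ω => αhat n ω / α n) (1 : ℝ))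
    -- assumptions (A0) and (A2) for `f_n`
    (hA0 : A0 P θhat θstar)
    (hA2 : A2 P L θhat θstar α V) :
    -- (i) `θ̂` is the unique maximizer of the tilted likelihood
    (∀ n ω θ, θ ≠ θhat n ω →
      L n ω θ ^ (αhat n ω / α n) < L n ω (θhat n ω) ^ (αhat n ω / α n)) ∧
    -- (ii) the tilted likelihood satisfies (A2) with the same `V` and `Δ n`
    (∀ r : ℝ, 0 < r → ∀ ε : ℝ, 0 < ε →
      Tendsto (fun n => P n {ω | ∃ h : EuclideanSpace ℝ (Fin p), ‖h‖ ≤ r ∧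
        ε < |α n * (Real.log (L n ω (θstar + (Real.sqrt (α n * (n : ℝ)))⁻¹ • h)
                      ^ (αhat n ω / α n)) -
                Real.log (L n ω θstar ^ (αhat n ω / α n)))
              - Real.sqrt (α n) *
                  ∑ i, ∑ j, h i * V i j * (Real.sqrt n * (θhat n ω j - θstar j))
              + (1 / 2) * ∑ i, ∑ j, h i * V i j * h j|}) atTop (nhds 0)) := by
  constructor
  · intro n ω θ hθ
    exact Real.rpow_lt_rpow (hLpos n ω θ).le (hMLE n ω θ hθ)
      (div_pos (hαhatpos n ω) (hαpos n))
  · intro r hr ε hε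
    rw [ENNReal.tendsto_nhds_zero]
    intro ζ hζ
    have hζ1 : (0:ENNReal) < min ζ 1 := lt_min hζ (by norm_num)
    have hζ2 : min ζ 1 ≠ ⊤ := (lt_of_le_of_lt (min_le_right _ _) (by norm_num)).ne
    set η := (min ζ 1).toReal with hηdef
    have hη0 : 0 < η := ENNReal.toReal_pos hζ1.ne' hζ2
    have hle : ENNReal.ofReal η ≤ ζ := by
      rw [hηdef, ENNReal.ofReal_toReal hζ2]; exact min_le_left _ _
    obtain ⟨M, hM, hMev⟩ := tight_of_A0 P θhat θstar hθmeas hA0 (η/3) (by positivity)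
    have hVnn : 0 ≤ ∑ i, ∑ j, |V i j| :=
      Finset.sum_nonneg fun i _ => Finset.sum_nonneg fun j _ => abs_nonneg _
    set W := (∑ i, ∑ j, |V i j|) + 1 with hWdef
    have hW0 : 0 < W := by positivity
    set D := r * M * W + r * r * W + 1 with hDdef
    have hD0 : 0 < D := by positivity
    set δ₂ := min 1 ((ε/3)/D) with hδ₂def
    have hδ₂0 : 0 < δ₂ := lt_min one_pos (by positivity)
    have hδ₂1 : δ₂ ≤ 1 := min_le_left _ _
    have hδ₂D : δ₂ * D ≤ ε/3 :=
      calc δ₂ * D ≤ ((ε/3)/D) * D :=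
            mul_le_mul_of_nonneg_right (min_le_right _ _) hD0.le
        _ = ε/3 := div_mul_cancel₀ _ hD0.ne'
    clear_value W D δ₂
    have hA := (ENNReal.tendsto_nhds_zero.mp (hA2.2.2 r hr (ε/6) (by positivity)))
      (ENNReal.ofReal (η/3)) (ENNReal.ofReal_pos.mpr (by positivity))
    have hB := (ENNReal.tendsto_nhds_zero.mp (hratio δ₂ hδ₂0))
      (ENNReal.ofReal (η/3)) (ENNReal.ofReal_pos.mpr (by positivity))
    have hα1 : ∀ᶠ n in atTop, α n ≤ 1 := hα0.eventually (eventually_le_nhds (by norm_num))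
    filter_upwards [hMev, hA, hB, hα1] with n hCn hAn hBn hα1n
    have hsub : {ω | ∃ h : EuclideanSpace ℝ (Fin p), ‖h‖ ≤ r ∧
        ε < |α n * (Real.log (L n ω (θstar + (Real.sqrt (α n * (n : ℝ)))⁻¹ • h)
                      ^ (αhat n ω / α n)) -
                Real.log (L n ω θstar ^ (αhat n ω / α n)))
              - Real.sqrt (α n) *
                  ∑ i, ∑ j, h i * V i j * (Real.sqrt n * (θhat n ω j - θstar j))
              + (1 / 2) * ∑ i, ∑ j, h i * V i j * h j|} ⊆
        (({ω | ∃ h : EuclideanSpace ℝ (Fin p), ‖h‖ ≤ r ∧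
          ε/6 < |α n * (Real.log (L n ω (θstar + (Real.sqrt (α n * (n : ℝ)))⁻¹ • h)) -
                Real.log (L n ω θstar))
              - Real.sqrt (α n) *
                  ∑ i, ∑ j, h i * V i j * (Real.sqrt n * (θhat n ω j - θstar j))
              + (1 / 2) * ∑ i, ∑ j, h i * V i j * h j|} ∪
          {ω | δ₂ < ‖αhat n ω / α n - 1‖}) ∪
          {ω | M < ‖(Real.sqrt n) • (θhat n ω - θstar)‖}) := by
      intro ω hω
      simp only [Set.mem_setOf_eq] at hω
      obtain ⟨h, hhr, hgt⟩ := hω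
      by_contra hnot
      simp only [Set.mem_union, Set.mem_setOf_eq, not_or] at hnot
      obtain ⟨⟨hnA, hnB⟩, hnC⟩ := hnot
      push_neg at hnA
      rw [not_lt] at hnB hnC
      have hRn := hnA h hhr
      rw [Real.log_rpow (hLpos n ω _), Real.log_rpow (hLpos n ω _)] at hgt
      set c := αhat n ω / α n with hcdef
      have hc0 : 0 < c := div_pos (hαhatpos n ω) (hαpos n)
      have hc1 : |c - 1| ≤ δ₂ := by rw [← Real.norm_eq_abs]; exact hnB
      have hc2 : c ≤ 2 := by
        have := abs_le.mp hc1; linarith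
      -- coordinate bounds
      have hcoordh : ∀ i, |h i| ≤ r := fun i => (euclid_coord_le h i).trans hhr
      have hcoordD : ∀ j, |Real.sqrt n * (θhat n ω j - θstar j)| ≤ M := by
        intro j
        have h1 : ((Real.sqrt n) • (θhat n ω - θstar)) j
            = Real.sqrt n * (θhat n ω j - θstar j) := by
          simp [PiLp.smul_apply, PiLp.sub_apply]
        calc |Real.sqrt n * (θhat n ω j - θstar j)|
            = |((Real.sqrt n) • (θhat n ω - θstar)) j| := by rw [h1]
          _ ≤ ‖(Real.sqrt n) • (θhat n ω - θstar)‖ := euclid_coord_le _ j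
          _ ≤ M := hnC
      set T := ∑ i, ∑ j, h i * V i j * (Real.sqrt n * (θhat n ω j - θstar j)) with hTdef
      set Q := ∑ i, ∑ j, h i * V i j * h j with hQdef
      have hT : |T| ≤ r * M * ∑ i, ∑ j, |V i j| := by
        calc |T| ≤ ∑ i, |∑ j, h i * V i j * (Real.sqrt n * (θhat n ω j - θstar j))| :=
              Finset.abs_sum_le_sum_abs _ _
          _ ≤ ∑ i, ∑ j, |h i * V i j * (Real.sqrt n * (θhat n ω j - θstar j))| :=
              Finset.sum_le_sum fun i _ => Finset.abs_sum_le_sum_abs _ _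
          _ ≤ ∑ i, ∑ j, r * M * |V i j| := by
              refine Finset.sum_le_sum fun i _ => Finset.sum_le_sum fun j _ => ?_
              rw [abs_mul, abs_mul]
              have h3 := abs_nonneg (V i j)
              have h5 := abs_nonneg (Real.sqrt n * (θhat n ω j - θstar j))
              calc |h i| * |V i j| * |Real.sqrt n * (θhat n ω j - θstar j)|
                  ≤ r * |V i j| * |Real.sqrt n * (θhat n ω j - θstar j)| :=
                    mul_le_mul_of_nonneg_right
                      (mul_le_mul_of_nonneg_right (hcoordh i) h3) h5
                _ ≤ r * |V i j| * M :=
                    mul_le_mul_of_nonneg_left (hcoordD j) (by positivity)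
                _ = r * M * |V i j| := by ring
          _ = r * M * ∑ i, ∑ j, |V i j| := by
              rw [Finset.mul_sum]
              exact Finset.sum_congr rfl fun i _ => by rw [Finset.mul_sum]
      have hQb : |Q| ≤ r * r * ∑ i, ∑ j, |V i j| := by
        calc |Q| ≤ ∑ i, |∑ j, h i * V i j * h j| := Finset.abs_sum_le_sum_abs _ _
          _ ≤ ∑ i, ∑ j, |h i * V i j * h j| :=
              Finset.sum_le_sum fun i _ => Finset.abs_sum_le_sum_abs _ _
          _ ≤ ∑ i, ∑ j, r * r * |V i j| := by
              refine Finset.sum_le_sum fun i _ => Finset.sum_le_sum fun j _ => ?_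
              rw [abs_mul, abs_mul]
              have h3 := abs_nonneg (V i j)
              have h5 := abs_nonneg (h j)
              calc |h i| * |V i j| * |h j|
                  ≤ r * |V i j| * |h j| :=
                    mul_le_mul_of_nonneg_right
                      (mul_le_mul_of_nonneg_right (hcoordh i) h3) h5
                _ ≤ r * |V i j| * r :=
                    mul_le_mul_of_nonneg_left (hcoordh j) (by positivity)
                _ = r * r * |V i j| := by ring
          _ = r * r * ∑ i, ∑ j, |V i j| := by
              rw [Finset.mul_sum]
              exact Finset.sum_congr rfl fun i _ => by rw [Finset.mul_sum]
      have hTW : |T| ≤ r * M * W := by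
        have : r * M * (∑ i, ∑ j, |V i j|) ≤ r * M * W := by
          apply mul_le_mul_of_nonneg_left _ (by positivity)
          rw [hWdef]; linarith
        linarith
      have hQW : |Q| ≤ r * r * W := by
        have : r * r * (∑ i, ∑ j, |V i j|) ≤ r * r * W := by
          apply mul_le_mul_of_nonneg_left _ (by positivity)
          rw [hWdef]; linarith
        linarith
      have hsa0 : 0 ≤ Real.sqrt (α n) := Real.sqrt_nonneg _
      have hsa1 : Real.sqrt (α n) ≤ 1 := Real.sqrt_le_one.mpr hα1n
      set Lh := Real.log (L n ω (θstar + (Real.sqrt (α n * (n : ℝ)))⁻¹ • h)) with hLhdef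
      set L0 := Real.log (L n ω θstar) with hL0def
      have hkey : α n * (c * Lh - c * L0) - Real.sqrt (α n) * T + (1/2) * Q
          = c * (α n * (Lh - L0) - Real.sqrt (α n) * T + (1/2) * Q)
            + (c - 1) * (Real.sqrt (α n) * T - (1/2) * Q) := by ring
      rw [hkey] at hgt
      set Rn := α n * (Lh - L0) - Real.sqrt (α n) * T + (1/2) * Q with hRndef
      clear_value T Q Lh L0 Rn c
      have hbound : |c * Rn + (c - 1) * (Real.sqrt (α n) * T - (1/2) * Q)|
          ≤ c * |Rn| + |c - 1| * (Real.sqrt (α n) * |T| + (1/2) * |Q|) := by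
        calc |c * Rn + (c - 1) * (Real.sqrt (α n) * T - (1/2) * Q)|
            ≤ |c * Rn| + |(c - 1) * (Real.sqrt (α n) * T - (1/2) * Q)| := abs_add_le _ _
          _ = c * |Rn| + |c - 1| * |Real.sqrt (α n) * T - (1/2) * Q| := by
              rw [abs_mul, abs_mul, abs_of_pos hc0]
          _ ≤ c * |Rn| + |c - 1| * (Real.sqrt (α n) * |T| + (1/2) * |Q|) := by
              apply add_le_add_right
              apply mul_le_mul_of_nonneg_left _ (abs_nonneg _)
              calc |Real.sqrt (α n) * T - (1/2) * Q|
                  ≤ |Real.sqrt (α n) * T| + |(1/2) * Q| := abs_sub _ _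
                _ = Real.sqrt (α n) * |T| + (1/2) * |Q| := by
                    rw [abs_mul, abs_mul, abs_of_nonneg hsa0]
                    norm_num
      have hfin1 : Real.sqrt (α n) * |T| ≤ r * M * W := by
        calc Real.sqrt (α n) * |T| ≤ 1 * |T| :=
              mul_le_mul_of_nonneg_right hsa1 (abs_nonneg T)
          _ = |T| := one_mul _
          _ ≤ r * M * W := hTW
      have hfin2 : |c - 1| * (Real.sqrt (α n) * |T| + (1/2) * |Q|) ≤ ε/3 := by
        have hs : Real.sqrt (α n) * |T| + (1/2) * |Q| ≤ D := by
          rw [hDdef]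
          have hq0 := abs_nonneg Q
          have hw : 0 ≤ r * r * W := by positivity
          linarith [hfin1, hQW]
        have hs0 : 0 ≤ Real.sqrt (α n) * |T| + (1/2) * |Q| := by positivity
        calc |c - 1| * (Real.sqrt (α n) * |T| + (1/2) * |Q|) ≤ δ₂ * D := by
              apply mul_le_mul hc1 hs hs0 hδ₂0.le
          _ ≤ ε/3 := hδ₂D
      have hfin3 : c * |Rn| ≤ ε/3 := by
        have h2 : c * |Rn| ≤ 2 * (ε/6) := mul_le_mul hc2 hRn (abs_nonneg _) (by norm_num)
        linarith
      linarith [hgt, hbound, hfin2, hfin3]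
    calc P n _ ≤ P n _ := measure_mono hsub
      _ ≤ (P n {ω | ∃ h : EuclideanSpace ℝ (Fin p), ‖h‖ ≤ r ∧
          ε/6 < |α n * (Real.log (L n ω (θstar + (Real.sqrt (α n * (n : ℝ)))⁻¹ • h)) -
                Real.log (L n ω θstar))
              - Real.sqrt (α n) *
                  ∑ i, ∑ j, h i * V i j * (Real.sqrt n * (θhat n ω j - θstar j))
              + (1 / 2) * ∑ i, ∑ j, h i * V i j * h j|}
          + P n {ω | δ₂ < ‖αhat n ω / α n - 1‖})
          + P n {ω | M < ‖(Real.sqrt n) • (θhat n ω - θstar)‖} :=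
            le_trans (measure_union_le _ _) (add_le_add_left (measure_union_le _ _) _)
      _ ≤ (ENNReal.ofReal (η/3) + ENNReal.ofReal (η/3)) + ENNReal.ofReal (η/3) :=
            add_le_add (add_le_add hAn hBn) hCn
      _ = ENNReal.ofReal η := by
            rw [← ENNReal.ofReal_add (by positivity) (by positivity),
              ← ENNReal.ofReal_add (by positivity) (by positivity)]
            congr 1
            ring
      _ ≤ ζ := hle
end
end
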